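/- Let m ≥ 1 and let 0 < z_1 < … < z_m be real data. If π : ℝ → ℝ is a measurable nonnegative function with ∫_ℝ π(ξ) dξ < ∞ (i.e. π is proportional to a proper density), then the GP posterior normalizing constant C_m(π; z) is finite, i.e. the posterior arising from the prior π(σ,ξ) ∝ π(ξ)/σ is proper. -/

import Mathlib

open MeasureTheory Real Set
open scoped ENNReal Classical

/-- The inner integral over the scale `σ` of the Generalized Pareto posterior
integrand, for a fixed shape `ξ`, data `z` and prior `π(σ,ξ) ∝ π(ξ)/σ`:
`∫_{max(0, -ξ z_m)}^∞ σ^{-(m+1)} ∏_{i=1}^m (1 + ξ z_i/σ)^{-(1+1/ξ)} dσ`,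
with the Gumbel interpretation `σ^{-(m+1)} exp(-(Σ_i z_i)/σ)` when `ξ = 0`. -/
noncomputable def gpInner (m : ℕ) (z : Fin m → ℝ) (ξ : ℝ) : ℝ≥0∞ :=
  ∫⁻ σ in Set.Ioi (max 0 (-ξ * ⨆ i, z i)),
    ENNReal.ofReal
      (if ξ = 0 then σ ^ (-((m : ℝ) + 1)) * Real.exp (-(∑ i, z i) / σ)
       else σ ^ (-((m : ℝ) + 1)) * ∏ i, (1 + ξ * z i / σ) ^ (-(1 + 1 / ξ)))

/-- The Generalized Pareto posterior normalizing constant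
`C_m(π; z) = ∫_ℝ π(ξ) ∫_{max(0,-ξ z_m)}^∞ σ^{-(m+1)} ∏_i (1+ξ z_i/σ)^{-(1+1/ξ)} dσ dξ`. -/
noncomputable def gpC (m : ℕ) (z : Fin m → ℝ) (p : ℝ → ℝ) : ℝ≥0∞ :=
  ∫⁻ ξ : ℝ, ENNReal.ofReal (p ξ) * gpInner m z ξ

/- ### Auxiliary definitions and lemmas -/

/-- The dominating single-observation GP integrand (for the largest data point). -/
noncomputable def gpH (M ξ σ : ℝ) : ℝ :=
  if ξ = 0 then Real.exp (-M / σ) else (1 + ξ * M / σ) ^ (-(1 + 1 / ξ))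

/-- An antiderivative of `σ ↦ σ⁻² gpH M ξ σ`. -/
noncomputable def gpF (M ξ σ : ℝ) : ℝ :=
  (if ξ = 0 then Real.exp (-M / σ) else (1 + ξ * M / σ) ^ (-(1 / ξ))) / M

lemma gp_measurable_rpow_const (c : ℝ) : Measurable fun x : ℝ => x ^ c := by
  have h : (fun x : ℝ => x ^ c) = fun x =>
      if 0 < x then Real.exp (Real.log x * c)
      else if x < 0 then Real.exp (Real.log x * c) * Real.cos (c * Real.pi)
      else if c = 0 then 1 else 0 := by
    funext x
    rcases lt_trichotomy x 0 with h | h | h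
    · rw [if_neg (by linarith), if_pos h, Real.rpow_def_of_neg h, mul_comm c]
    · subst h
      rw [if_neg (lt_irrefl _), if_neg (lt_irrefl _)]
      by_cases hc : c = 0
      · simp [hc]
      · simp [hc, Real.zero_rpow hc]
    · rw [if_pos h, Real.rpow_def_of_pos h]
  rw [h]
  refine Measurable.ite (measurableSet_lt measurable_const measurable_id) ?_ ?_
  · exact (Real.measurable_log.mul measurable_const).exp
  · refine Measurable.ite (measurableSet_lt measurable_id measurable_const) ?_ ?_
    · exact ((Real.measurable_log.mul measurable_const).exp).mul measurable_const
    · exact measurable_const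

lemma gp_base_pos {M w ξ σ : ℝ} (hw : 0 < w) (hwM : w ≤ M) (hσ : max 0 (-ξ * M) < σ) :
    0 < 1 + ξ * w / σ := by
  have hσ0 : 0 < σ := (le_max_left _ _).trans_lt hσ
  have h2 : -ξ * M < σ := (le_max_right _ _).trans_lt hσ
  rcases le_or_gt 0 ξ with h | h
  · have : 0 ≤ ξ * w / σ := by positivity
    linarith
  · have h4 : -σ < ξ * w := by nlinarith
    have h5 : -1 < ξ * w / σ := by
      rw [lt_div_iff₀ hσ0]; linarith
    linarith

lemma gpH_nonneg {M ξ σ : ℝ} (hM : 0 < M) (hσ : max 0 (-ξ * M) < σ) : 0 ≤ gpH M ξ σ := by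
  rw [gpH]
  split
  · positivity
  · exact Real.rpow_nonneg (gp_base_pos hM le_rfl hσ).le _

lemma gpF_nonneg {M ξ σ : ℝ} (hM : 0 < M) (hσ : max 0 (-ξ * M) < σ) : 0 ≤ gpF M ξ σ := by
  rw [gpF]
  apply div_nonneg _ hM.le
  split
  · positivity
  · exact Real.rpow_nonneg (gp_base_pos hM le_rfl hσ).le _

lemma gpF_hasDeriv {M ξ : ℝ} (hM : 0 < M) {σ : ℝ} (hσ : max 0 (-ξ * M) < σ) :
    HasDerivAt (gpF M ξ) (σ ^ (-2 : ℝ) * gpH M ξ σ) σ := by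
  have hσ0 : 0 < σ := (le_max_left _ _).trans_lt hσ
  have hσne : σ ≠ 0 := ne_of_gt hσ0
  have hr2 : σ ^ (-2 : ℝ) = (σ ^ 2)⁻¹ := by
    rw [show (-2 : ℝ) = -((2 : ℕ) : ℝ) by norm_num, Real.rpow_neg hσ0.le,
      Real.rpow_natCast]
  by_cases hξ : ξ = 0
  · subst hξ
    have h1 : HasDerivAt (fun σ : ℝ => -M / σ) (M / σ ^ 2) σ := by
      have h : HasDerivAt (fun y : ℝ => -M * y⁻¹) (-M * -(σ ^ 2)⁻¹) σ :=
        (hasDerivAt_inv hσne).const_mul (-M)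
      convert h using 1
      all_goals field_simp
    have h2 : HasDerivAt (fun x => rexp (-M / x) / M) (rexp (-M / σ) * (M / σ ^ 2) / M) σ :=
      (h1.exp).div_const M
    have hfun : gpF M 0 = fun σ => Real.exp (-M / σ) / M := by
      funext x; simp [gpF]
    rw [hfun, gpH, if_pos rfl, hr2]
    convert h2 using 1
    field_simp
  · have hb : HasDerivAt (fun σ : ℝ => 1 + ξ * M / σ) (-(ξ * M) / σ ^ 2) σ := by
      have h : HasDerivAt (fun x : ℝ => 1 + ξ * M * x⁻¹) (ξ * M * -(σ ^ 2)⁻¹) σ :=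
        ((hasDerivAt_inv hσne).const_mul (ξ * M)).const_add 1
      convert h using 1
      all_goals field_simp
    have hbpos : 0 < 1 + ξ * M / σ := gp_base_pos hM le_rfl hσ
    have h3 := hb.rpow_const (p := -(1 / ξ)) (Or.inl (ne_of_gt hbpos))
    have h4 : HasDerivAt (fun x => (1 + ξ * M / x) ^ (-(1 / ξ)) / M)
        (-(ξ * M) / σ ^ 2 * -(1 / ξ) * (1 + ξ * M / σ) ^ (-(1 / ξ) - 1) / M) σ := h3.div_const M
    have hfun : gpF M ξ = fun σ => ((1 + ξ * M / σ) ^ (-(1 / ξ)) : ℝ) / M := by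
      funext x; simp [gpF, hξ]
    rw [hfun, gpH, if_neg hξ, hr2]
    convert h4 using 1
    rw [show -(1 / ξ) - 1 = -(1 + 1 / ξ) by ring]
    field_simp

lemma gpF_tendsto {M : ℝ} (hM : 0 < M) (ξ : ℝ) :
    Filter.Tendsto (gpF M ξ) Filter.atTop (nhds (1 / M)) := by
  by_cases hξ : ξ = 0
  · subst hξ
    have hd : Filter.Tendsto (fun σ : ℝ => -M / σ) Filter.atTop (nhds 0) :=
      Filter.Tendsto.div_atTop tendsto_const_nhds Filter.tendsto_id
    have h := ((Real.continuous_exp.tendsto 0).comp hd).div_const M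
    have hfun : gpF M 0 = fun σ => Real.exp (-M / σ) / M := by
      funext x; simp [gpF]
    rw [hfun]
    simpa using h
  · have hd : Filter.Tendsto (fun σ : ℝ => ξ * M / σ) Filter.atTop (nhds 0) :=
      Filter.Tendsto.div_atTop tendsto_const_nhds Filter.tendsto_id
    have h1 : Filter.Tendsto (fun σ : ℝ => 1 + ξ * M / σ) Filter.atTop (nhds 1) := by
      simpa using tendsto_const_nhds.add hd
    have h2 := h1.rpow_const (p := -(1 / ξ)) (Or.inl one_ne_zero)
    rw [Real.one_rpow] at h2
    have h3 := h2.div_const M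
    have hfun : gpF M ξ = fun σ => ((1 + ξ * M / σ) ^ (-(1 / ξ)) : ℝ) / M := by
      funext x; simp [gpF, hξ]
    rw [hfun]
    exact h3

lemma gpH_measurable (M ξ : ℝ) : Measurable (gpH M ξ) := by
  by_cases hξ : ξ = 0
  · subst hξ
    have h : gpH M 0 = fun σ => Real.exp (-M / σ) := by
      funext σ; simp [gpH]
    rw [h]
    exact (measurable_const.div measurable_id).exp
  · have h : gpH M ξ = fun σ => (1 + ξ * M / σ) ^ (-(1 + 1 / ξ)) := by
      funext σ; simp [gpH, hξ]
    rw [h]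
    exact (gp_measurable_rpow_const _).comp
      (measurable_const.add (measurable_const.div measurable_id))

/-- The key improper-integral bound: for every shape `ξ`, the dominating
single-observation integral is at most `1/M`. -/
lemma gp_key {M : ℝ} (hM : 0 < M) (ξ : ℝ) :
    ∫⁻ σ in Ioi (max 0 (-ξ * M)), ENNReal.ofReal (σ ^ (-2 : ℝ) * gpH M ξ σ)
      ≤ ENNReal.ofReal (1 / M) := by
  set a := max 0 (-ξ * M) with ha
  set g : ℝ → ℝ≥0∞ := fun σ => ENNReal.ofReal (σ ^ (-2 : ℝ) * gpH M ξ σ) with hg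
  have hgmeas : Measurable g :=
    ENNReal.measurable_ofReal.comp ((gp_measurable_rpow_const (-2)).mul (gpH_measurable M ξ))
  have key : ∀ c, a < c → ∫⁻ σ in Ioi c, g σ ≤ ENNReal.ofReal (1 / M) := by
    intro c hc
    have hder : ∀ x ∈ Ioi c, HasDerivAt (gpF M ξ) (x ^ (-2 : ℝ) * gpH M ξ x) x :=
      fun x hx => gpF_hasDeriv hM (hc.trans hx)
    have hnn : ∀ x ∈ Ioi c, 0 ≤ x ^ (-2 : ℝ) * gpH M ξ x := by
      intro x hx
      have hx' := hc.trans hx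
      have hx0 : (0 : ℝ) ≤ x := ((le_max_left _ _).trans_lt hx').le
      exact mul_nonneg (Real.rpow_nonneg hx0 _) (gpH_nonneg hM hx')
    have hcont : ContinuousWithinAt (gpF M ξ) (Ici c) c :=
      (gpF_hasDeriv hM hc).continuousAt.continuousWithinAt
    have htends := gpF_tendsto hM ξ
    have hInt : IntegrableOn (fun x => x ^ (-2 : ℝ) * gpH M ξ x) (Ioi c) :=
      integrableOn_Ioi_deriv_of_nonneg hcont hder hnn htends
    have hEq : ∫ x in Ioi c, x ^ (-2 : ℝ) * gpH M ξ x = 1 / M - gpF M ξ c :=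
      integral_Ioi_of_hasDerivAt_of_nonneg hcont hder hnn htends
    have h1 : ∫⁻ σ in Ioi c, g σ
        = ENNReal.ofReal (∫ σ in Ioi c, σ ^ (-2 : ℝ) * gpH M ξ σ) := by
      rw [ofReal_integral_eq_lintegral_ofReal hInt
        ((ae_restrict_iff' measurableSet_Ioi).2 (ae_of_all _ hnn))]
    rw [h1, hEq]
    apply ENNReal.ofReal_le_ofReal
    have := gpF_nonneg hM hc
    linarith
  -- pass to the limit over shrinking left endpoints
  have hsub : ∀ n : ℕ, a < a + ((n : ℝ) + 1)⁻¹ := by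
    intro n
    have : (0 : ℝ) < ((n : ℝ) + 1)⁻¹ := by positivity
    linarith
  have h2 : ∀ σ, (Ioi a).indicator g σ
      = ⨆ n : ℕ, (Ioi (a + ((n : ℝ) + 1)⁻¹)).indicator g σ := by
    intro σ
    rcases le_or_gt σ a with h | h
    · rw [indicator_of_notMem (by simpa using not_lt.2 h)]
      symm
      simp only [ENNReal.iSup_eq_zero]
      intro n
      apply indicator_of_notMem
      simp only [mem_Ioi, not_lt]
      exact h.trans (hsub n).le
    · rw [Set.indicator_of_mem (show σ ∈ Ioi a from h)]
      apply le_antisymm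
      · obtain ⟨n, hn⟩ := exists_nat_one_div_lt (sub_pos.2 h)
        have hn' : a + ((n : ℝ) + 1)⁻¹ < σ := by
          rw [one_div] at hn; linarith
        exact le_iSup_of_le n (le_of_eq (Set.indicator_of_mem (show σ ∈ Ioi _ from hn') g).symm)
      · apply iSup_le
        intro n
        rcases le_or_gt σ (a + ((n : ℝ) + 1)⁻¹) with h' | h'
        · rw [indicator_of_notMem (by simpa using not_lt.2 h')]
          exact zero_le
        · rw [Set.indicator_of_mem (show σ ∈ Ioi _ from h') g]
  have hmono : Monotone fun n : ℕ => (Ioi (a + ((n : ℝ) + 1)⁻¹)).indicator g := by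
    intro n k hnk
    apply Set.indicator_le_indicator_of_subset
    · apply Ioi_subset_Ioi
      have h1 : ((k : ℝ) + 1)⁻¹ ≤ ((n : ℝ) + 1)⁻¹ := by
        apply inv_anti₀ (by positivity)
        have : (n : ℝ) ≤ (k : ℝ) := Nat.cast_le.2 hnk
        linarith
      linarith
    · exact fun _ => zero_le
  calc ∫⁻ σ in Ioi a, g σ = ∫⁻ σ, (Ioi a).indicator g σ :=
        (lintegral_indicator measurableSet_Ioi _).symm
    _ = ∫⁻ σ, ⨆ n : ℕ, (Ioi (a + ((n : ℝ) + 1)⁻¹)).indicator g σ := by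
        congr 1; funext σ; exact h2 σ
    _ = ⨆ n : ℕ, ∫⁻ σ, (Ioi (a + ((n : ℝ) + 1)⁻¹)).indicator g σ :=
        lintegral_iSup (fun n => hgmeas.indicator measurableSet_Ioi) hmono
    _ = ⨆ n : ℕ, ∫⁻ σ in Ioi (a + ((n : ℝ) + 1)⁻¹), g σ := by
        congr 1; funext n; exact lintegral_indicator measurableSet_Ioi _
    _ ≤ ENNReal.ofReal (1 / M) := iSup_le fun n => key _ (hsub n)

lemma gp_factor0_le {w σ : ℝ} (hw : 0 < w) (hσ : 0 < σ) :
    σ⁻¹ * Real.exp (-w / σ) ≤ w⁻¹ := by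
  have hws : 0 < w / σ := div_pos hw hσ
  have h1 : w / σ ≤ Real.exp (w / σ) := by
    have := Real.add_one_le_exp (w / σ); linarith
  have h3 : Real.exp (-w / σ) ≤ (w / σ)⁻¹ := by
    rw [neg_div, Real.exp_neg]
    exact inv_anti₀ hws h1
  calc σ⁻¹ * Real.exp (-w / σ) ≤ σ⁻¹ * (w / σ)⁻¹ :=
        mul_le_mul_of_nonneg_left h3 (by positivity)
    _ = w⁻¹ := by field_simp

lemma gp_factor_le {M w ξ σ : ℝ} (hw : 0 < w) (hwM : w < M) (hξ : ξ ≠ 0)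
    (hσ : max 0 (-ξ * M) < σ) :
    σ⁻¹ * (1 + ξ * w / σ) ^ (-(1 + 1 / ξ)) ≤ max w⁻¹ (M - w)⁻¹ := by
  have hσ0 : 0 < σ := (le_max_left _ _).trans_lt hσ
  have hb : 0 < 1 + ξ * w / σ := gp_base_pos hw hwM.le hσ
  rcases lt_or_ge ξ (-1) with hξ1 | hξ1
  · -- case ξ < -1
    refine le_trans ?_ (le_max_right _ _)
    have hb1 : 1 + ξ * w / σ ≤ 1 := by
      have h0 : ξ * w < 0 := mul_neg_of_neg_of_pos (by linarith) hw
      have h1 : ξ * w / σ < 0 := div_neg_of_neg_of_pos h0 hσ0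
      linarith
    have h5 : (1 + ξ * w / σ) ^ (-(1 + 1 / ξ)) ≤ (1 + ξ * w / σ) ^ (-1 : ℝ) := by
      apply Real.rpow_le_rpow_of_exponent_ge hb hb1
      have h6 : 1 / ξ < 0 := by
        apply div_neg_of_pos_of_neg one_pos; linarith
      linarith
    have h6 : (1 + ξ * w / σ) ^ (-1 : ℝ) = (1 + ξ * w / σ)⁻¹ := by
      rw [Real.rpow_neg_one]
    have h7 : σ⁻¹ * (1 + ξ * w / σ)⁻¹ = (σ + ξ * w)⁻¹ := by
      rw [← mul_inv]
      congr 1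
      field_simp
    have h2 : -ξ * M < σ := (le_max_right _ _).trans_lt hσ
    have h8 : M - w ≤ σ + ξ * w := by nlinarith
    calc σ⁻¹ * (1 + ξ * w / σ) ^ (-(1 + 1 / ξ))
        ≤ σ⁻¹ * (1 + ξ * w / σ)⁻¹ := by
          rw [← h6]; exact mul_le_mul_of_nonneg_left h5 (by positivity)
      _ = (σ + ξ * w)⁻¹ := h7
      _ ≤ (M - w)⁻¹ := inv_anti₀ (by linarith) h8
  · refine le_trans ?_ (le_max_left _ _)
    rcases lt_or_ge ξ 0 with hξ0 | hξ0
    · -- case -1 ≤ ξ < 0 : logarithmic estimate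
      have hu0 : 0 < w / σ := div_pos hw hσ0
      set u : ℝ := w / σ with hu
      set q : ℝ := -(1 + 1 / ξ) with hq
      have hq0 : 0 ≤ q := by
        have h1ξ : 1 / ξ ≤ -1 := by
          rw [div_le_iff_of_neg hξ0]
          linarith
        rw [hq]; linarith
      have hbu : 1 + ξ * w / σ = 1 + ξ * u := by rw [hu]; ring
      have hbu0 : 0 < 1 + ξ * u := by rw [← hbu]; exact hb
      have key : u * (1 + ξ * u) ^ q ≤ 1 := by
        have h1 : Real.log u ≤ u - 1 := Real.log_le_sub_one_of_pos hu0
        have h2 : Real.log (1 + ξ * u) ≤ ξ * u := by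
          have := Real.log_le_sub_one_of_pos hbu0; linarith
        have h3 : (1 + ξ * u) ^ q = Real.exp (Real.log (1 + ξ * u) * q) :=
          Real.rpow_def_of_pos hbu0 q
        calc u * (1 + ξ * u) ^ q
            = Real.exp (Real.log u + Real.log (1 + ξ * u) * q) := by
              rw [h3, Real.exp_add, Real.exp_log hu0]
          _ ≤ Real.exp 0 := by
              apply Real.exp_le_exp.2
              have h5 : Real.log (1 + ξ * u) * q ≤ (ξ * u) * q :=
                mul_le_mul_of_nonneg_right h2 hq0
              have h7 : (ξ * u) * q = -(ξ + 1) * u := by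
                rw [hq]; field_simp
              nlinarith
          _ = 1 := Real.exp_zero
      have heq : σ⁻¹ * (1 + ξ * w / σ) ^ (-(1 + 1 / ξ)) = u * (1 + ξ * u) ^ q / w := by
        rw [hbu, ← hq, hu]
        field_simp
      rw [heq]
      calc u * (1 + ξ * u) ^ q / w ≤ 1 / w := by
            apply (div_le_div_iff_of_pos_right hw).2 key
        _ = w⁻¹ := one_div w
    · -- case ξ > 0 : Bernoulli
      have hξp : 0 < ξ := lt_of_le_of_ne hξ0 (Ne.symm hξ)
      have hp : 1 ≤ 1 + 1 / ξ := by
        have : 0 < 1 / ξ := by positivity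
        linarith
      have hs : (-1 : ℝ) ≤ ξ * w / σ := by
        have : 0 ≤ ξ * w / σ := by positivity
        linarith
      have hB := one_add_mul_self_le_rpow_one_add hs hp
      have hexpand : 1 + (1 + 1 / ξ) * (ξ * w / σ) = 1 + ξ * w / σ + w / σ := by
        field_simp; ring
      have h10 : 0 ≤ ξ * w / σ := by positivity
      have h9 : w / σ ≤ (1 + ξ * w / σ) ^ (1 + 1 / ξ) := by
        refine le_trans ?_ hB
        rw [hexpand]
        linarith
      have hws : 0 < w / σ := div_pos hw hσ0
      have h11 : (1 + ξ * w / σ) ^ (-(1 + 1 / ξ))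
          = ((1 + ξ * w / σ) ^ (1 + 1 / ξ))⁻¹ := Real.rpow_neg hb.le _
      rw [h11]
      have h12 : ((1 + ξ * w / σ) ^ (1 + 1 / ξ))⁻¹ ≤ (w / σ)⁻¹ :=
        inv_anti₀ hws h9
      calc σ⁻¹ * ((1 + ξ * w / σ) ^ (1 + 1 / ξ))⁻¹ ≤ σ⁻¹ * (w / σ)⁻¹ :=
            mul_le_mul_of_nonneg_left h12 (by positivity)
        _ = w⁻¹ := by field_simp

/-- If `m ≥ 1`, the data satisfy `0 < z_1 < ⋯ < z_m`, and `π` is a measurable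
nonnegative function with `∫_ℝ π(ξ) dξ < ∞`, then the GP posterior normalizing
constant `C_m(π; z)` is finite, i.e. the posterior arising from the prior
`π(σ,ξ) ∝ π(ξ)/σ` is proper. -/
theorem gp_proper_of_integrable_prior
    (m : ℕ) (hm : 1 ≤ m) (z : Fin m → ℝ)
    (hzpos : ∀ i, 0 < z i) (hzmono : StrictMono z)
    (p : ℝ → ℝ) (hmeas : Measurable p) (hnn : ∀ ξ, 0 ≤ p ξ)
    (hint : (∫⁻ ξ : ℝ, ENNReal.ofReal (p ξ)) < ⊤) :
    gpC m z p < ⊤ := by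
  classical
  have hm0 : 0 < m := hm
  set j : Fin m := ⟨m - 1, by omega⟩ with hj
  set M : ℝ := z j with hMdef
  have hMpos : 0 < M := hzpos j
  have hzM : ∀ i, z i ≤ M := by
    intro i
    apply hzmono.monotone
    show i ≤ j
    rw [Fin.le_def, hj]
    have := i.isLt
    simp only []
    omega
  have hne : Nonempty (Fin m) := ⟨j⟩
  have hsup : (⨆ i, z i) = M :=
    le_antisymm (ciSup_le hzM) (le_ciSup (Set.Finite.bddAbove (Set.finite_range z)) j)
  have hlt : ∀ i : Fin m, i ≠ j → z i < M := by
    intro i hi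
    apply hzmono
    rw [Fin.lt_def, hj]
    have h1 := i.isLt
    have h2 : i.val ≠ m - 1 := by
      intro h
      apply hi
      rw [hj]
      exact Fin.ext h
    simp only []
    omega
  set C : Fin m → ℝ := fun i => max (z i)⁻¹ (M - z i)⁻¹ with hC
  set K : ℝ := ∏ i ∈ Finset.univ.erase j, C i with hK
  have hCnn : ∀ i : Fin m, 0 ≤ C i := fun i =>
    le_trans (inv_nonneg.2 (hzpos i).le) (le_max_left _ _)
  have hKnn : 0 ≤ K := Finset.prod_nonneg fun i _ => hCnn i
  have hcard : (Finset.univ.erase j).card = m - 1 := by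
    rw [Finset.card_erase_of_mem (Finset.mem_univ _), Finset.card_univ, Fintype.card_fin]
  have hInner : ∀ ξ : ℝ, gpInner m z ξ ≤ ENNReal.ofReal (K * (1 / M)) := by
    intro ξ
    unfold gpInner
    rw [hsup]
    have hbound : ∀ σ ∈ Ioi (max 0 (-ξ * M)),
        (if ξ = 0 then σ ^ (-((m : ℝ) + 1)) * Real.exp (-(∑ i, z i) / σ)
         else σ ^ (-((m : ℝ) + 1)) * ∏ i, (1 + ξ * z i / σ) ^ (-(1 + 1 / ξ)))
          ≤ K * (σ ^ (-2 : ℝ) * gpH M ξ σ) := by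
      intro σ hσ
      have hσ0 : 0 < σ := (le_max_left _ _).trans_lt hσ
      have hsplit : σ ^ (-((m : ℝ) + 1)) = σ ^ (-2 : ℝ) * (σ⁻¹) ^ (m - 1) := by
        have hcast : (((m - 1 : ℕ)) : ℝ) = (m : ℝ) - 1 := by
          push_cast [Nat.cast_sub hm]
          ring
        have h1 : σ ^ (-((m : ℝ) + 1)) = σ ^ (-2 : ℝ) * σ ^ (-(((m - 1 : ℕ)) : ℝ)) := by
          rw [← Real.rpow_add hσ0]
          congr 1
          rw [hcast]; ring
        rw [h1]
        congr 1
        rw [Real.rpow_neg hσ0.le, Real.rpow_natCast, ← inv_pow]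
      have hppow : (σ⁻¹ : ℝ) ^ (m - 1) = ∏ _i ∈ Finset.univ.erase j, σ⁻¹ := by
        rw [Finset.prod_const, hcard]
      by_cases hξ : ξ = 0
      · subst hξ
        rw [if_pos rfl]
        have hHH : gpH M 0 σ = Real.exp (-M / σ) := by simp [gpH]
        rw [hHH]
        have hsum : (∑ i, z i) = M + ∑ i ∈ Finset.univ.erase j, z i := by
          rw [hMdef]
          exact (Finset.add_sum_erase _ _ (Finset.mem_univ j)).symm
        have hexp : Real.exp (-(∑ i, z i) / σ)
            = Real.exp (-M / σ) * ∏ i ∈ Finset.univ.erase j, Real.exp (-z i / σ) := by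
          rw [← Real.exp_sum, ← Real.exp_add]
          congr 1
          have hS : ∑ i ∈ Finset.univ.erase j, -z i / σ
              = -(∑ i ∈ Finset.univ.erase j, z i) / σ := by
            rw [← Finset.sum_div]
            congr 1
            simp
          rw [hsum, hS]
          ring
        calc σ ^ (-((m : ℝ) + 1)) * Real.exp (-(∑ i, z i) / σ)
            = (σ ^ (-2 : ℝ) * Real.exp (-M / σ))
              * ∏ i ∈ Finset.univ.erase j, (σ⁻¹ * Real.exp (-z i / σ)) := by
              rw [hsplit, hexp, hppow, Finset.prod_mul_distrib]
              ring
          _ ≤ (σ ^ (-2 : ℝ) * Real.exp (-M / σ)) * K := by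
              apply mul_le_mul_of_nonneg_left _ (by positivity)
              apply Finset.prod_le_prod
              · intro i _
                positivity
              · intro i _
                exact le_trans (gp_factor0_le (hzpos i) hσ0) (le_max_left _ _)
          _ = K * (σ ^ (-2 : ℝ) * Real.exp (-M / σ)) := by ring
      · rw [if_neg hξ]
        have hHH : gpH M ξ σ = (1 + ξ * M / σ) ^ (-(1 + 1 / ξ)) := by simp [gpH, hξ]
        rw [hHH]
        have hprod : (∏ i, (1 + ξ * z i / σ) ^ (-(1 + 1 / ξ)))
            = (1 + ξ * M / σ) ^ (-(1 + 1 / ξ))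
              * ∏ i ∈ Finset.univ.erase j, (1 + ξ * z i / σ) ^ (-(1 + 1 / ξ)) := by
          rw [hMdef]
          exact (Finset.mul_prod_erase _ _ (Finset.mem_univ j)).symm
        have hbM := gp_base_pos hMpos le_rfl hσ
        calc σ ^ (-((m : ℝ) + 1)) * ∏ i, (1 + ξ * z i / σ) ^ (-(1 + 1 / ξ))
            = (σ ^ (-2 : ℝ) * (1 + ξ * M / σ) ^ (-(1 + 1 / ξ)))
              * ∏ i ∈ Finset.univ.erase j, (σ⁻¹ * (1 + ξ * z i / σ) ^ (-(1 + 1 / ξ))) := by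
              rw [hsplit, hprod, hppow, Finset.prod_mul_distrib]
              ring
          _ ≤ (σ ^ (-2 : ℝ) * (1 + ξ * M / σ) ^ (-(1 + 1 / ξ))) * K := by
              apply mul_le_mul_of_nonneg_left _ ?_
              · apply Finset.prod_le_prod
                · intro i _
                  have := gp_base_pos (hzpos i) (hzM i) hσ
                  positivity
                · intro i hi
                  exact gp_factor_le (hzpos i) (hlt i (Finset.ne_of_mem_erase hi)) hξ hσ
              · have h0 : (0:ℝ) ≤ (1 + ξ * M / σ) ^ (-(1 + 1 / ξ)) :=
                  Real.rpow_nonneg hbM.le _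
                positivity
          _ = K * (σ ^ (-2 : ℝ) * (1 + ξ * M / σ) ^ (-(1 + 1 / ξ))) := by ring
    have hmeasG : Measurable fun σ : ℝ =>
        ENNReal.ofReal (K * (σ ^ (-2 : ℝ) * gpH M ξ σ)) :=
      ENNReal.measurable_ofReal.comp
        (measurable_const.mul ((gp_measurable_rpow_const (-2)).mul (gpH_measurable M ξ)))
    have step1 : (∫⁻ σ in Ioi (max 0 (-ξ * M)),
        ENNReal.ofReal (if ξ = 0 then σ ^ (-((m : ℝ) + 1)) * Real.exp (-(∑ i, z i) / σ)
          else σ ^ (-((m : ℝ) + 1)) * ∏ i, (1 + ξ * z i / σ) ^ (-(1 + 1 / ξ))))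
        ≤ ∫⁻ σ in Ioi (max 0 (-ξ * M)),
            ENNReal.ofReal (K * (σ ^ (-2 : ℝ) * gpH M ξ σ)) := by
      apply setLIntegral_mono hmeasG
      intro σ hσ
      exact ENNReal.ofReal_le_ofReal (hbound σ hσ)
    refine le_trans step1 ?_
    calc (∫⁻ σ in Ioi (max 0 (-ξ * M)), ENNReal.ofReal (K * (σ ^ (-2 : ℝ) * gpH M ξ σ)))
        = ENNReal.ofReal K
          * ∫⁻ σ in Ioi (max 0 (-ξ * M)), ENNReal.ofReal (σ ^ (-2 : ℝ) * gpH M ξ σ) := by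
          simp_rw [ENNReal.ofReal_mul hKnn]
          exact lintegral_const_mul' _ _ ENNReal.ofReal_ne_top
      _ ≤ ENNReal.ofReal K * ENNReal.ofReal (1 / M) :=
          mul_le_mul_right (gp_key hMpos ξ) _
      _ = ENNReal.ofReal (K * (1 / M)) := (ENNReal.ofReal_mul hKnn).symm
  calc gpC m z p = ∫⁻ ξ : ℝ, ENNReal.ofReal (p ξ) * gpInner m z ξ := rfl
    _ ≤ ∫⁻ ξ : ℝ, ENNReal.ofReal (p ξ) * ENNReal.ofReal (K * (1 / M)) :=
        lintegral_mono fun ξ => mul_le_mul_right (hInner ξ) _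
    _ = ENNReal.ofReal (K * (1 / M)) * ∫⁻ ξ : ℝ, ENNReal.ofReal (p ξ) := by
        simp_rw [mul_comm (ENNReal.ofReal (p _)) (ENNReal.ofReal (K * (1 / M)))]
        exact lintegral_const_mul' _ _ ENNReal.ofReal_ne_top
    _ < ⊤ := ENNReal.mul_lt_top (by simp [ENNReal.ofReal_lt_top]) hint
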